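/- The threshold number of the cycle C_n is 1 if n = 3, 2 if n = 4, and 4 if n ≥ 5. -/

import Mathlib

set_option linter.unusedTactic false
set_option linter.unreachableTactic false
set_option linter.unusedVariables false

open Classical in
/-- A graph is a k-threshold graph if there are thresholds θ₁ < ... < θ_k and
ranks r with uv an edge iff an odd number of thresholds are ≤ r u + r v. -/
def IsKThresholdGraph {V : Type*} (G : SimpleGraph V) (k : ℕ) : Prop :=
  ∃ θ : Fin k → ℝ, StrictMono θ ∧ ∃ r : V → ℝ, ∀ u v : V, u ≠ v →
    (G.Adj u v ↔ Odd (Finset.univ.filter (fun i => θ i ≤ r u + r v)).card)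

open SimpleGraph

section Aux


open Classical in
lemma odd1 (θ : Fin 1 → ℝ) (s : ℝ) :
    Odd (Finset.univ.filter (fun i => θ i ≤ s)).card ↔ θ 0 ≤ s := by
  rw [Finset.card_filter, Fin.sum_univ_one]
  by_cases h : θ 0 ≤ s <;> simp [h]

open Classical in
lemma odd2 (θ : Fin 2 → ℝ) (hθ : StrictMono θ) (s : ℝ) :
    Odd (Finset.univ.filter (fun i => θ i ≤ s)).card ↔ (θ 0 ≤ s ∧ s < θ 1) := by
  have h01 : θ 0 < θ 1 := hθ (by decide)
  rw [Finset.card_filter, Fin.sum_univ_two]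
  split_ifs with h0 h1 h1 <;>
    norm_num [Nat.odd_iff] <;>
    simp -failIfUnchanged only [not_le] at * <;>
    first
      | (exfalso; linarith)
      | (constructor <;> linarith)
      | (constructor <;> intro <;> linarith)
      | (refine ⟨fun _ => by linarith, by linarith⟩)
      | (intro; linarith)
      | (rintro ⟨u,v⟩ <;> linarith)

open Classical in
lemma odd3 (θ : Fin 3 → ℝ) (hθ : StrictMono θ) (s : ℝ) :
    Odd (Finset.univ.filter (fun i => θ i ≤ s)).card ↔
      ((θ 0 ≤ s ∧ s < θ 1) ∨ θ 2 ≤ s) := by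
  have h01 : θ 0 < θ 1 := hθ (by decide)
  have h12 : θ 1 < θ 2 := hθ (by decide)
  rw [Finset.card_filter, Fin.sum_univ_three]
  split_ifs with h0 h1 h2 h1 h2 h2 h2 <;>
    norm_num [Nat.odd_iff] <;>
    simp -failIfUnchanged only [not_le] at * <;>
    first
      | (exfalso; linarith)
      | (left; constructor <;> linarith)
      | (right; linarith)
      | (constructor <;> intro <;> linarith)
      | (refine ⟨fun _ => by linarith, by linarith⟩)
      | (intro; linarith)
      | (rintro (⟨u,v⟩|u) <;> linarith)

open Classical in
lemma odd4 (θ : Fin 4 → ℝ) (hθ : StrictMono θ) (s : ℝ) :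
    Odd (Finset.univ.filter (fun i => θ i ≤ s)).card ↔
      ((θ 0 ≤ s ∧ s < θ 1) ∨ (θ 2 ≤ s ∧ s < θ 3)) := by
  have h01 : θ 0 < θ 1 := hθ (by decide)
  have h12 : θ 1 < θ 2 := hθ (by decide)
  have h23 : θ 2 < θ 3 := hθ (by decide)
  rw [Finset.card_filter, Fin.sum_univ_four]
  split_ifs with h0 h1 h2 h3 <;>
    norm_num [Nat.odd_iff] <;>
    simp -failIfUnchanged only [not_le] at * <;>
    first
      | (exfalso; linarith)
      | (left; constructor <;> linarith)
      | (right; constructor <;> linarith)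
      | (constructor <;> intro <;> linarith)
      | (rintro (⟨u,v⟩|⟨u,v⟩) <;> linarith)



lemma adj_iff_val {n : ℕ} (hn : 5 ≤ n) (i j : Fin n) :
    (cycleGraph n).Adj i j ↔
      (i.val + 1 = j.val ∨ j.val + 1 = i.val ∨
        (i.val = 0 ∧ j.val + 1 = n) ∨ (j.val = 0 ∧ i.val + 1 = n)) := by
  rw [cycleGraph_adj']
  have hi := i.isLt
  have hj := j.isLt
  have h1 := Fin.coe_int_sub_eq_ite i j
  have h2 := Fin.coe_int_sub_eq_ite j i
  split_ifs at h1 h2 with ha hb <;> rw [Fin.le_def] at * <;> omega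

/-- cycle indexing map from ℤ -/
def ez {n : ℕ} (hn : 0 < n) : ℤ → Fin n :=
  fun k => ⟨(k % (n : ℤ)).toNat, by
    have h1 : 0 ≤ k % (n : ℤ) := Int.emod_nonneg k (by exact_mod_cast hn.ne')
    have h2 : k % (n : ℤ) < n := Int.emod_lt_of_pos k (by exact_mod_cast hn)
    omega⟩

lemma ez_val {n : ℕ} (hn : 0 < n) (k : ℤ) : ((ez hn k : Fin n) : ℕ) = (k % (n : ℤ)).toNat := rfl

lemma ez_eq {n : ℕ} (hn : 0 < n) {k l : ℤ} (h : k % (n : ℤ) = l % (n : ℤ)) :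
    ez hn k = ez hn l := by
  simp [ez, h]

lemma ez_shift {n : ℕ} (hn : 0 < n) (k : ℤ) : ez hn (k + n) = ez hn k := by
  refine ez_eq hn ?_
  conv_lhs => rw [Int.add_emod]
  rw [Int.emod_self, add_zero, Int.emod_emod_of_dvd _ dvd_rfl]

section
variable {n : ℕ} (hn : 5 ≤ n)

private lemma hn0 (hn : 5 ≤ n) : 0 < n := by omega

lemma ez_mod_facts (hn : 5 ≤ n) (k : ℤ) (d : ℤ) (hd : 0 ≤ d) (hdn : d < n) :
    (k + d) % (n : ℤ) = (k % n + d) % n ∧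
    ((k % (n:ℤ) + d < n ∧ (k % n + d) % n = k % n + d) ∨
      ((n:ℤ) ≤ k % n + d ∧ (k % n + d) % n = k % n + d - n)) := by
  have hnz : (n : ℤ) ≠ 0 := by omega
  have h1 : 0 ≤ k % (n : ℤ) := Int.emod_nonneg k hnz
  have h2 : k % (n : ℤ) < n := Int.emod_lt_of_pos k (by omega)
  constructor
  · conv_lhs => rw [Int.add_emod]
    rw [Int.emod_eq_of_lt hd hdn]
  · rcases lt_or_ge (k % (n:ℤ) + d) n with h | h
    · exact Or.inl ⟨h, Int.emod_eq_of_lt (by omega) h⟩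
    · refine Or.inr ⟨h, ?_⟩
      have : (k % (n:ℤ) + d) % n = (k % (n:ℤ) + d - n) % n := by
        rw [Int.sub_emod, Int.emod_self, sub_zero, Int.emod_emod_of_dvd _ dvd_rfl]
      rw [this, Int.emod_eq_of_lt (by omega) (by omega)]

lemma ez_adj (k : ℤ) : (cycleGraph n).Adj (ez (hn0 hn) k) (ez (hn0 hn) (k + 1)) := by
  have hnz : (n : ℤ) ≠ 0 := by omega
  have h1 : 0 ≤ k % (n : ℤ) := Int.emod_nonneg k hnz
  have h2 : k % (n : ℤ) < n := Int.emod_lt_of_pos k (by omega)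
  obtain ⟨m1, m2⟩ := ez_mod_facts hn k 1 (by omega) (by omega)
  rw [adj_iff_val hn]
  simp only [ez_val]
  omega

lemma ez_nadj2 (k : ℤ) :
    ¬ (cycleGraph n).Adj (ez (hn0 hn) k) (ez (hn0 hn) (k + 2)) ∧
      ez (hn0 hn) k ≠ ez (hn0 hn) (k + 2) := by
  have hnz : (n : ℤ) ≠ 0 := by omega
  have h1 : 0 ≤ k % (n : ℤ) := Int.emod_nonneg k hnz
  have h2 : k % (n : ℤ) < n := Int.emod_lt_of_pos k (by omega)
  obtain ⟨m1, m2⟩ := ez_mod_facts hn k 2 (by omega) (by omega)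
  constructor
  · rw [adj_iff_val hn]
    simp only [ez_val]
    omega
  · rw [ne_eq, Fin.ext_iff]
    simp only [ez_val]
    omega

lemma ez_nadj3 (k : ℤ) :
    ¬ (cycleGraph n).Adj (ez (hn0 hn) k) (ez (hn0 hn) (k + 3)) ∧
      ez (hn0 hn) k ≠ ez (hn0 hn) (k + 3) := by
  have hnz : (n : ℤ) ≠ 0 := by omega
  have h1 : 0 ≤ k % (n : ℤ) := Int.emod_nonneg k hnz
  have h2 : k % (n : ℤ) < n := Int.emod_lt_of_pos k (by omega)
  obtain ⟨m1, m2⟩ := ez_mod_facts hn k 3 (by omega) (by omega)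
  constructor
  · rw [adj_iff_val hn]
    simp only [ez_val]
    omega
  · rw [ne_eq, Fin.ext_iff]
    simp only [ez_val]
    omega

end

/-- Case I core: no 2-interval representation of the cycle. Stated abstractly:
`w k` is the rank of the k-th vertex around the cycle (ℤ-indexed, n-periodic). -/
lemma interval_core {n : ℕ} (hn : 5 ≤ n) (θ1 θ2 : ℝ) (w : ℤ → ℝ)
    (hper : ∀ k : ℤ, w (k + n) = w k)
    (hedge : ∀ k : ℤ, θ1 ≤ w k + w (k + 1) ∧ w k + w (k + 1) < θ2)
    (hnon : ∀ k : ℤ, ¬(θ1 ≤ w k + w (k + 3) ∧ w k + w (k + 3) < θ2)) : False := by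
  set P : ℤ → Prop := fun k => w k < w (k + 2) with hP
  have step : ∀ k : ℤ, (P k ∧ ¬ P (k + 1)) ∨ ((w (k + 2) < w k) ∧ P (k + 1)) := by
    intro k
    have E1 := hedge k
    have E2 := hedge (k + 2)
    have e23 : k + 2 + 1 = k + 3 := by ring
    rw [e23] at E2
    have N := hnon k
    have e13 : k + 1 + 2 = k + 3 := by ring
    rcases le_or_gt θ1 (w k + w (k + 3)) with h | h
    · have h2 : θ2 ≤ w k + w (k + 3) := by
        by_contra hc
        exact N ⟨h, by linarith⟩
      refine Or.inr ⟨by linarith [E2.2], ?_⟩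
      simp only [hP, e13]
      linarith [E1.2]
    · refine Or.inl ⟨by linarith [E2.1], ?_⟩
      simp only [hP, e13]
      push_neg
      linarith [E1.1]
  have flip : ∀ k : ℤ, P (k + 1) ↔ ¬ P k := by
    intro k
    rcases step k with ⟨h1, h2⟩ | ⟨h1, h2⟩
    · exact ⟨fun h => absurd h h2, fun h => absurd h1 h⟩
    · exact ⟨fun _ h' => absurd h' (not_lt.2 h1.le), fun _ => h2⟩
  have even2 : ∀ (k : ℤ) (m : ℕ), P (k + 2 * m) ↔ P k := by
    intro k m
    induction m with
    | zero => simp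
    | succ m ih =>
      have e1 : k + 2 * ((m : ℤ) + 1) = (k + 2 * m) + 1 + 1 := by ring
      push_cast
      rw [e1, flip, flip]
      push_cast at ih
      rw [not_not, ih]
  -- parity of n
  rcases Nat.even_or_odd n with ⟨m, hm⟩ | ⟨m, hm⟩
  · -- even case
    have hm3 : 3 ≤ m := by omega
    have keyP : ∀ j : ℕ, P (2 * j) ↔ P 0 := by
      intro j
      have := even2 0 j
      simpa using this
    have wrap : ∀ k : ℤ, w (k + 2 * m) = w k := by
      intro k
      have := hper k
      rw [show (n : ℤ) = 2 * m by omega] at this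
      · exact this
    rcases Classical.em (P 0) with hP0 | hP0
    · have mono : StrictMono (fun j : ℕ => w (2 * j)) := by
        apply strictMono_nat_of_lt_succ
        intro j
        have h1 : P (2 * j) := (keyP j).2 hP0
        simp only [hP] at h1
        have e1 : (2 : ℤ) * (j + 1) = 2 * j + 2 := by ring
        push_cast
        rw [e1]
        exact h1
      have := mono (show 0 < m by omega)
      simp only at this
      rw [show (2 : ℤ) * (m : ℕ) = 0 + 2 * m by ring, wrap 0] at this
      simp at this
    · have anti : StrictAnti (fun j : ℕ => w (2 * j)) := by
        apply strictAnti_nat_of_succ_lt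
        intro j
        have h1 : ¬ P (2 * j) := fun h => hP0 ((keyP j).1 h)
        rcases step (2 * j) with ⟨h2, _⟩ | ⟨h2, _⟩
        · exact absurd h2 h1
        · have e1 : (2 : ℤ) * (j + 1) = 2 * j + 2 := by ring
          push_cast
          rw [e1]
          exact h2
      have := anti (show 0 < m by omega)
      simp only at this
      rw [show (2 : ℤ) * (m : ℕ) = 0 + 2 * m by ring, wrap 0] at this
      simp at this
  · -- odd case
    have hPn : P (1 + 2 * m) ↔ P 1 := even2 1 m
    have h1n : (1 : ℤ) + 2 * m = n := by omega
    have hwrap0 : w ((0 : ℤ) + n) = w 0 := hper 0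
    have hwrap2 : w ((2 : ℤ) + n) = w 2 := hper 2
    have hPnP0 : P (1 + 2 * m) ↔ P 0 := by
      rw [h1n]
      simp only [hP]
      rw [show (n : ℤ) + 2 = 2 + n by ring, hwrap2, show (n : ℤ) = 0 + n by ring, hwrap0]
      simp
    have := flip 0
    simp only [show (0 : ℤ) + 1 = 1 from rfl] at this
    rw [← hPnP0, hPn] at this
    tauto

open Classical in
lemma isK_succ {V : Type*} [Fintype V] [Nonempty V] {G : SimpleGraph V} {k : ℕ}
    (h : IsKThresholdGraph G k) : IsKThresholdGraph G (k + 1) := by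
  classical
  obtain ⟨θ, hθ, r, hr⟩ := h
  -- bound above all sums and all thresholds
  obtain ⟨B, hB⟩ : ∃ B : ℝ, (∀ u v : V, r u + r v < B) ∧ ∀ i, θ i < B := by
    have h1 : ∃ C : ℝ, ∀ u v : V, r u + r v ≤ C := by
      obtain ⟨C, hC⟩ := Finset.exists_le (Finset.univ.image fun p : V × V => r p.1 + r p.2)
      exact ⟨C, fun u v => hC _ (Finset.mem_image.2 ⟨(u, v), Finset.mem_univ _, rfl⟩)⟩
    have h2 : ∃ D : ℝ, ∀ i, θ i ≤ D := by
      rcases Nat.eq_zero_or_pos k with rfl | hk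
      · exact ⟨0, fun i => i.elim0⟩
      obtain ⟨D, hD⟩ := Finset.exists_le (Finset.univ.image θ)
      exact ⟨D, fun i => hD _ (Finset.mem_image.2 ⟨i, Finset.mem_univ _, rfl⟩)⟩
    obtain ⟨C, hC⟩ := h1
    obtain ⟨D, hD⟩ := h2
    exact ⟨max C D + 1, fun u v => by have := hC u v; have := le_max_left C D; linarith,
      fun i => by have := hD i; have := le_max_right C D; linarith⟩
  refine ⟨Fin.snoc θ B, ?_, r, ?_⟩
  · intro i j hij
    rcases Fin.eq_castSucc_or_eq_last j with ⟨j', rfl⟩ | rfl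
    · rcases Fin.eq_castSucc_or_eq_last i with ⟨i', rfl⟩ | rfl
      · rw [Fin.snoc_castSucc, Fin.snoc_castSucc]
        exact hθ (by exact_mod_cast hij)
      · exact absurd hij (not_lt.2 (Fin.castSucc_lt_last j').le)
    · rcases Fin.eq_castSucc_or_eq_last i with ⟨i', rfl⟩ | rfl
      · rw [Fin.snoc_castSucc, Fin.snoc_last]
        exact hB.2 _
      · exact absurd hij (lt_irrefl _)
  · intro u v huv
    rw [hr u v huv]
    have hcard : (Finset.univ.filter fun i : Fin (k+1) => (Fin.snoc θ B : Fin (k+1) → ℝ) i ≤ r u + r v).card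
        = (Finset.univ.filter fun i : Fin k => θ i ≤ r u + r v).card := by
      rw [Finset.card_filter, Finset.card_filter, Fin.sum_univ_castSucc]
      have : ¬ ((Fin.snoc θ B : Fin (k+1) → ℝ) (Fin.last k)) ≤ r u + r v := by
        rw [Fin.snoc_last]; exact not_le.2 (hB.1 u v)
      rw [if_neg this, add_zero]
      exact Finset.sum_congr rfl fun i _ => by rw [Fin.snoc_castSucc]
    rw [hcard]



/-- Pure arithmetic core of case II (an edge with sum ≥ θ₃ exists). Vertices along the
cycle: w0 w1 w2 w3 w4 w5 w6 (consecutive), with `a = w3`, `b = w4` the heavy edge. -/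
lemma caseII_core (θ1 θ2 θ3 : ℝ) (r0 r1 r2 r3 r4 r5 r6 : ℝ)
    -- edges (each sum in [θ1,θ2) or ≥ θ3):
    (e01 : (θ1 ≤ r0 + r1 ∧ r0 + r1 < θ2) ∨ θ3 ≤ r0 + r1)
    (e12 : (θ1 ≤ r1 + r2 ∧ r1 + r2 < θ2) ∨ θ3 ≤ r1 + r2)
    (e23 : (θ1 ≤ r2 + r3 ∧ r2 + r3 < θ2) ∨ θ3 ≤ r2 + r3)
    (e45 : (θ1 ≤ r4 + r5 ∧ r4 + r5 < θ2) ∨ θ3 ≤ r4 + r5)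
    (e56 : (θ1 ≤ r5 + r6 ∧ r5 + r6 < θ2) ∨ θ3 ≤ r5 + r6)
    -- the heavy edge and orientation:
    (h34 : θ3 ≤ r3 + r4) (h43 : r4 ≤ r3)
    -- non-edges (sum not in [θ1,θ2) and < θ3):
    (n03 : ¬(θ1 ≤ r0 + r3 ∧ r0 + r3 < θ2) ∧ r0 + r3 < θ3)
    (n13 : ¬(θ1 ≤ r1 + r3 ∧ r1 + r3 < θ2) ∧ r1 + r3 < θ3)
    (n35 : ¬(θ1 ≤ r3 + r5 ∧ r3 + r5 < θ2) ∧ r3 + r5 < θ3)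
    (n36 : ¬(θ1 ≤ r3 + r6 ∧ r3 + r6 < θ2) ∧ r3 + r6 < θ3)
    (n46 : ¬(θ1 ≤ r4 + r6 ∧ r4 + r6 < θ2) ∧ r4 + r6 < θ3)
    (n14 : ¬(θ1 ≤ r1 + r4 ∧ r1 + r4 < θ2) ∧ r1 + r4 < θ3)
    (n24 : ¬(θ1 ≤ r2 + r4 ∧ r2 + r4 < θ2) ∧ r2 + r4 < θ3)
    (n25 : ¬(θ1 ≤ r2 + r5 ∧ r2 + r5 < θ2) ∧ r2 + r5 < θ3) :
    False := by
  -- bounds below r4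
  have b0 : r0 < θ3 - r3 := by linarith [n03.2]
  have b1 : r1 < θ3 - r3 := by linarith [n13.2]
  have b5 : r5 < θ3 - r3 := by linarith [n35.2]
  have b6 : r6 < θ3 - r3 := by linarith [n36.2]
  have hb : θ3 - r3 ≤ r4 := by linarith
  have h2lt : r2 < r3 := by linarith [n24.2]
  -- low edges
  have L01 : θ1 ≤ r0 + r1 ∧ r0 + r1 < θ2 := by
    rcases e01 with h | h
    · exact h
    · exfalso; linarith
  have L12 : θ1 ≤ r1 + r2 ∧ r1 + r2 < θ2 := by
    rcases e12 with h | h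
    · exact h
    · exfalso; linarith
  have L45 : θ1 ≤ r4 + r5 ∧ r4 + r5 < θ2 := by
    rcases e45 with h | h
    · exact h
    · exfalso; linarith
  have L56 : θ1 ≤ r5 + r6 ∧ r5 + r6 < θ2 := by
    rcases e56 with h | h
    · exact h
    · exfalso; linarith
  -- θ2 ≤ r4 + r6
  have H46 : θ2 ≤ r4 + r6 := by
    have h1 : θ1 ≤ r4 + r6 := by linarith [L56.1]
    by_contra hc
    exact n46.1 ⟨h1, by linarith⟩
  have h56' : r5 < r6 := by linarith [L45.2]
  -- θ2 ≤ r1 + r4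
  have H14 : θ2 ≤ r1 + r4 := by
    have h1 : θ1 ≤ r1 + r4 := by linarith [L01.1]
    by_contra hc
    exact n14.1 ⟨h1, by linarith⟩
  have h24' : r2 < r4 := by linarith [L12.2]
  -- θ2 ≤ r2 + r4
  have H24 : θ2 ≤ r2 + r4 := by
    have h1 : θ1 ≤ r2 + r4 := by linarith [L12.1]
    by_contra hc
    exact n24.1 ⟨h1, by linarith⟩
  rcases e23 with hlow | hhigh
  · -- a–a' edge in the low interval
    linarith [hlow.2]
  · -- a–a' heavy
    have h62 : r6 < r2 := by linarith
    have H25 : θ2 ≤ r2 + r5 := by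
      have h1 : θ1 ≤ r2 + r5 := by linarith [L56.1]
      by_contra hc
      exact n25.1 ⟨h1, by linarith⟩
    linarith [L45.2]

lemma c3_is1 : IsKThresholdGraph (cycleGraph 3) 1 := by
  refine ⟨fun _ => 0, fun a b hab => absurd (Subsingleton.elim a b) hab.ne, fun _ => 1, ?_⟩
  intro u v huv
  rw [odd1, cycleGraph_three_eq_top]
  simp [huv]

lemma c4_is2 : IsKThresholdGraph (cycleGraph 4) 2 := by
  refine ⟨![1, 2], ?_, ![0, 1, 0, 1], ?_⟩
  · intro a b hab
    fin_cases a <;> fin_cases b <;> simp_all <;> norm_num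
  · intro u v huv
    rw [odd2 _ (by intro a b hab; fin_cases a <;> fin_cases b <;> simp_all <;> norm_num)]
    fin_cases u <;> fin_cases v <;> simp_all <;> norm_num <;> decide

lemma c4_not1 : ¬ IsKThresholdGraph (cycleGraph 4) 1 := by
  rintro ⟨θ, hθ, r, h⟩
  have h01 : (cycleGraph 4).Adj 0 1 := by decide
  have h23 : (cycleGraph 4).Adj 2 3 := by decide
  have h02 : ¬ (cycleGraph 4).Adj 0 2 := by decide
  have h13 : ¬ (cycleGraph 4).Adj 1 3 := by decide
  have e01 : θ 0 ≤ r 0 + r 1 := (odd1 θ _).1 ((h 0 1 (by decide)).1 h01)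
  have e23 : θ 0 ≤ r 2 + r 3 := (odd1 θ _).1 ((h 2 3 (by decide)).1 h23)
  have e02 : ¬ θ 0 ≤ r 0 + r 2 := fun hc => h02 ((h 0 2 (by decide)).2 ((odd1 θ _).2 hc))
  have e13 : ¬ θ 0 ≤ r 1 + r 3 := fun hc => h13 ((h 1 3 (by decide)).2 ((odd1 θ _).2 hc))
  push_neg at e02 e13
  linarith

open Classical in
lemma cn_is4_odd {n : ℕ} (hn : 5 ≤ n) (hodd : n % 2 = 1) :
    IsKThresholdGraph (cycleGraph n) 4 := by
  have hnR : (5:ℝ) ≤ (n:ℝ) := by exact_mod_cast hn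
  set X : ℝ := (n:ℝ) - 3/4 with hX
  set r : Fin n → ℝ := fun j =>
    if j.val = 0 then 0 else if j.val = n-1 then X else (-1)^j.val * j.val with hr
  set θ : Fin 4 → ℝ := ![-2, 2, (n:ℝ) - 4/5, (n:ℝ) - 7/10] with hθdef
  have t0 : θ 0 = -2 := rfl
  have t1 : θ 1 = 2 := rfl
  have t2 : θ 2 = (n:ℝ) - 4/5 := rfl
  have t3 : θ 3 = (n:ℝ) - 7/10 := rfl
  have hmono : StrictMono θ := by
    rw [Fin.strictMono_iff_lt_succ]
    intro i
    fin_cases i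
    · show θ 0 < θ 1
      rw [t0, t1]; norm_num
    · show θ 1 < θ 2
      rw [t1, t2]; linarith
    · show θ 2 < θ 3
      rw [t2, t3]; linarith
  refine ⟨θ, hmono, r, ?_⟩
  have key : ∀ i j : Fin n, i.val < j.val →
      ((cycleGraph n).Adj i j ↔
        ((-2 ≤ r i + r j ∧ r i + r j < 2) ∨
          ((n:ℝ) - 4/5 ≤ r i + r j ∧ r i + r j < (n:ℝ) - 7/10))) := by
    intro i j hij
    have hjlt := j.isLt
    rw [adj_iff_val hn]
    by_cases ha0 : i.val = 0
    · have hri : r i = 0 := by simp [hr, ha0]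
      by_cases hbn : j.val = n - 1
      · have hrj : r j = X := by
          simp [hr, hbn, show n - 1 ≠ 0 by omega]
        apply iff_of_true
        · exact Or.inr (Or.inr (Or.inl ⟨ha0, by omega⟩))
        · rw [hri, hrj, hX]
          right
          constructor <;> linarith
      · have hrj : r j = (-1)^j.val * j.val := by
          simp [hr, show j.val ≠ 0 by omega, hbn]
        by_cases hb1 : j.val = 1
        · apply iff_of_true
          · exact Or.inl (by omega)
          · rw [hri, hrj, hb1]
            left; norm_num
        · apply iff_of_false
          · omega
          · have hb2 : 2 ≤ j.val := by omega
            have hbn2 : j.val ≤ n - 2 := by omega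
            have hbR : (j.val:ℝ) + 2 ≤ (n:ℝ) := by exact_mod_cast (show j.val + 2 ≤ n by omega)
            have hb2R : (2:ℝ) ≤ (j.val:ℝ) := by exact_mod_cast hb2
            rw [hri, hrj]
            rcases Nat.even_or_odd j.val with he | ho
            · rw [he.neg_one_pow]
              rintro (⟨p, q⟩ | ⟨p, q⟩) <;> linarith
            · rw [ho.neg_one_pow]
              have hb3 : (3:ℝ) ≤ (j.val:ℝ) := by
                exact_mod_cast (show 3 ≤ j.val by
                  have := Nat.odd_iff.1 ho; omega)
              rintro (⟨p, q⟩ | ⟨p, q⟩) <;> linarith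
    · have hi1 : 1 ≤ i.val := by omega
      have hrin : i.val ≠ n - 1 := by omega
      have hri : r i = (-1)^i.val * i.val := by simp [hr, ha0, hrin]
      by_cases hbn : j.val = n - 1
      · have hrj : r j = X := by simp [hr, hbn, show n - 1 ≠ 0 by omega]
        by_cases han2 : i.val = n - 2
        · apply iff_of_true
          · exact Or.inl (by omega)
          · have hio : i.val % 2 = 1 := by omega
            rw [hri, hrj, (Nat.odd_iff.2 hio).neg_one_pow, hX]
            have : (i.val : ℝ) = (n:ℝ) - 2 := by
              rw [han2]; push_cast [Nat.cast_sub (by omega : 2 ≤ n)]; ring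
            rw [this]
            left; constructor <;> linarith
        · apply iff_of_false
          · omega
          · rw [hri, hrj, hX]
            have hiR : (1:ℝ) ≤ (i.val:ℝ) := by exact_mod_cast hi1
            rcases Nat.even_or_odd i.val with he | ho
            · rw [he.neg_one_pow]
              rintro (⟨p, q⟩ | ⟨p, q⟩) <;> linarith
            · rw [ho.neg_one_pow]
              have hi4 : i.val + 4 ≤ n := by
                have := Nat.odd_iff.1 ho; omega
              have hi4R : (i.val:ℝ) + 4 ≤ (n:ℝ) := by exact_mod_cast hi4
              rintro (⟨p, q⟩ | ⟨p, q⟩) <;> linarith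
      · -- interior pair
        have hrj : r j = (-1)^j.val * j.val := by
          simp [hr, show j.val ≠ 0 by omega, hbn]
        have hbn2 : j.val + 2 ≤ n := by omega
        have hbR : (j.val:ℝ) + 2 ≤ (n:ℝ) := by exact_mod_cast hbn2
        by_cases hab : i.val + 1 = j.val
        · apply iff_of_true
          · exact Or.inl hab
          · left
            rw [hri, hrj, ← hab]
            rcases Nat.even_or_odd i.val with he | ho
            · rw [he.neg_one_pow, (by simpa using he.add_one : Odd (i.val + 1)).neg_one_pow]
              push_cast
              constructor <;> linarith
            · rw [ho.neg_one_pow, (by simpa using ho.add_one : Even (i.val + 1)).neg_one_pow]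
              push_cast
              constructor <;> linarith
        · apply iff_of_false
          · omega
          · rw [hri, hrj]
            have hab2 : i.val + 2 ≤ j.val := by omega
            have hiR : (1:ℝ) ≤ (i.val:ℝ) := by exact_mod_cast (show 1 ≤ i.val by omega)
            rcases Nat.even_or_odd i.val with hea | hoa <;>
              rcases Nat.even_or_odd j.val with heb | hob
            · -- even, even : s = a + b, gap trick
              rw [hea.neg_one_pow, heb.neg_one_pow]
              have ha2 : (2:ℝ) ≤ (i.val:ℝ) := by
                exact_mod_cast (show 2 ≤ i.val by have := Nat.even_iff.1 hea; omega)
              rintro (⟨p, q⟩ | ⟨p, q⟩)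
              · linarith
              · have h1 : i.val + j.val < n := by
                  have : (i.val:ℝ) + (j.val:ℝ) < (n:ℝ) := by linarith
                  exact_mod_cast this
                have h2 : n ≤ i.val + j.val := by
                  have : (n:ℝ) < (i.val:ℝ) + (j.val:ℝ) + 1 := by linarith
                  have := (by exact_mod_cast this : n < i.val + j.val + 1)
                  omega
                omega
            · -- even, odd : s = a - b ≤ -3
              rw [hea.neg_one_pow, hob.neg_one_pow]
              have h3 : i.val + 3 ≤ j.val := by
                have h1 := Nat.even_iff.1 hea; have h2 := Nat.odd_iff.1 hob; omega
              have h3R : (i.val:ℝ) + 3 ≤ (j.val:ℝ) := by exact_mod_cast h3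
              rintro (⟨p, q⟩ | ⟨p, q⟩) <;> linarith
            · -- odd, even : s = b - a ∈ [3, n-3]
              rw [hoa.neg_one_pow, heb.neg_one_pow]
              have h3 : i.val + 3 ≤ j.val := by
                have h1 := Nat.odd_iff.1 hoa; have h2 := Nat.even_iff.1 heb; omega
              have h3R : (i.val:ℝ) + 3 ≤ (j.val:ℝ) := by exact_mod_cast h3
              rintro (⟨p, q⟩ | ⟨p, q⟩) <;> linarith
            · -- odd, odd : s = -(a+b) ≤ -4
              rw [hoa.neg_one_pow, hob.neg_one_pow]
              have h3R : (3:ℝ) ≤ (j.val:ℝ) := by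
                exact_mod_cast (show 3 ≤ j.val by
                  have h1 := Nat.odd_iff.1 hob; omega)
              rintro (⟨p, q⟩ | ⟨p, q⟩) <;> linarith
  intro u v huv
  rw [odd4 θ hmono, t0, t1, t2, t3]
  rcases lt_trichotomy u.val v.val with h | h | h
  · exact key u v h
  · exact absurd (Fin.ext h) huv
  · rw [adj_comm, add_comm (r u) (r v)]
    exact key v u h

open Classical in
lemma cn_is4_even {n : ℕ} (hn : 5 ≤ n) (heven : n % 2 = 0) :
    IsKThresholdGraph (cycleGraph n) 4 := by
  have hnR : (5:ℝ) ≤ (n:ℝ) := by exact_mod_cast hn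
  set X : ℝ := -(n:ℝ) + 5/4 with hX
  set r : Fin n → ℝ := fun j =>
    if j.val = 0 then 0 else if j.val = n-1 then X else (-1)^j.val * j.val with hr
  set θ : Fin 4 → ℝ := ![-(n:ℝ) + 6/5, -(n:ℝ) + 13/10, -2, 2] with hθdef
  have t0 : θ 0 = -(n:ℝ) + 6/5 := rfl
  have t1 : θ 1 = -(n:ℝ) + 13/10 := rfl
  have t2 : θ 2 = -2 := rfl
  have t3 : θ 3 = 2 := rfl
  have hmono : StrictMono θ := by
    rw [Fin.strictMono_iff_lt_succ]
    intro i
    fin_cases i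
    · show θ 0 < θ 1
      rw [t0, t1]; norm_num
    · show θ 1 < θ 2
      rw [t1, t2]; linarith
    · show θ 2 < θ 3
      rw [t2, t3]; norm_num
  refine ⟨θ, hmono, r, ?_⟩
  have key : ∀ i j : Fin n, i.val < j.val →
      ((cycleGraph n).Adj i j ↔
        ((-(n:ℝ) + 6/5 ≤ r i + r j ∧ r i + r j < -(n:ℝ) + 13/10) ∨
          (-2 ≤ r i + r j ∧ r i + r j < 2))) := by
    intro i j hij
    have hjlt := j.isLt
    rw [adj_iff_val hn]
    by_cases ha0 : i.val = 0
    · have hri : r i = 0 := by simp [hr, ha0]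
      by_cases hbn : j.val = n - 1
      · have hrj : r j = X := by
          simp [hr, hbn, show n - 1 ≠ 0 by omega]
        apply iff_of_true
        · exact Or.inr (Or.inr (Or.inl ⟨ha0, by omega⟩))
        · rw [hri, hrj, hX]
          left
          constructor <;> linarith
      · have hrj : r j = (-1)^j.val * j.val := by
          simp [hr, show j.val ≠ 0 by omega, hbn]
        by_cases hb1 : j.val = 1
        · apply iff_of_true
          · exact Or.inl (by omega)
          · rw [hri, hrj, hb1]
            right; norm_num
        · apply iff_of_false
          · omega
          · have hb2 : 2 ≤ j.val := by omega
            have hbR : (j.val:ℝ) + 2 ≤ (n:ℝ) := by exact_mod_cast (show j.val + 2 ≤ n by omega)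
            have hb2R : (2:ℝ) ≤ (j.val:ℝ) := by exact_mod_cast hb2
            rw [hri, hrj]
            rcases Nat.even_or_odd j.val with he | ho
            · rw [he.neg_one_pow]
              rintro (⟨p, q⟩ | ⟨p, q⟩) <;> linarith
            · rw [ho.neg_one_pow]
              have hb3 : (3:ℝ) ≤ (j.val:ℝ) := by
                exact_mod_cast (show 3 ≤ j.val by
                  have := Nat.odd_iff.1 ho; omega)
              rintro (⟨p, q⟩ | ⟨p, q⟩) <;> linarith
    · have hi1 : 1 ≤ i.val := by omega
      have hrin : i.val ≠ n - 1 := by omega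
      have hri : r i = (-1)^i.val * i.val := by simp [hr, ha0, hrin]
      by_cases hbn : j.val = n - 1
      · have hrj : r j = X := by simp [hr, hbn, show n - 1 ≠ 0 by omega]
        by_cases han2 : i.val = n - 2
        · apply iff_of_true
          · exact Or.inl (by omega)
          · have hie : i.val % 2 = 0 := by omega
            rw [hri, hrj, (Nat.even_iff.2 hie).neg_one_pow, hX]
            have : (i.val : ℝ) = (n:ℝ) - 2 := by
              rw [han2]; push_cast [Nat.cast_sub (by omega : 2 ≤ n)]; ring
            rw [this]
            right; constructor <;> linarith
        · apply iff_of_false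
          · omega
          · rw [hri, hrj, hX]
            have hiR : (1:ℝ) ≤ (i.val:ℝ) := by exact_mod_cast hi1
            rcases Nat.even_or_odd i.val with he | ho
            · rw [he.neg_one_pow]
              have hi4 : i.val + 4 ≤ n := by
                have := Nat.even_iff.1 he; omega
              have hi4R : (i.val:ℝ) + 4 ≤ (n:ℝ) := by exact_mod_cast hi4
              have hi2R : (2:ℝ) ≤ (i.val:ℝ) := by
                exact_mod_cast (show 2 ≤ i.val by have := Nat.even_iff.1 he; omega)
              rintro (⟨p, q⟩ | ⟨p, q⟩) <;> linarith
            · rw [ho.neg_one_pow]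
              rintro (⟨p, q⟩ | ⟨p, q⟩) <;> linarith
      · -- interior pair
        have hrj : r j = (-1)^j.val * j.val := by
          simp [hr, show j.val ≠ 0 by omega, hbn]
        have hbn2 : j.val + 2 ≤ n := by omega
        have hbR : (j.val:ℝ) + 2 ≤ (n:ℝ) := by exact_mod_cast hbn2
        by_cases hab : i.val + 1 = j.val
        · apply iff_of_true
          · exact Or.inl hab
          · right
            rw [hri, hrj, ← hab]
            rcases Nat.even_or_odd i.val with he | ho
            · rw [he.neg_one_pow, (by simpa using he.add_one : Odd (i.val + 1)).neg_one_pow]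
              push_cast
              constructor <;> linarith
            · rw [ho.neg_one_pow, (by simpa using ho.add_one : Even (i.val + 1)).neg_one_pow]
              push_cast
              constructor <;> linarith
        · apply iff_of_false
          · omega
          · rw [hri, hrj]
            have hab2 : i.val + 2 ≤ j.val := by omega
            have hiR : (1:ℝ) ≤ (i.val:ℝ) := by exact_mod_cast (show 1 ≤ i.val by omega)
            rcases Nat.even_or_odd i.val with hea | hoa <;>
              rcases Nat.even_or_odd j.val with heb | hob
            · -- even even : s = a + b ≥ 6
              rw [hea.neg_one_pow, heb.neg_one_pow]
              have ha2 : (2:ℝ) ≤ (i.val:ℝ) := by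
                exact_mod_cast (show 2 ≤ i.val by have := Nat.even_iff.1 hea; omega)
              rintro (⟨p, q⟩ | ⟨p, q⟩) <;> linarith
            · -- even odd : s = a - b,  b ≤ n-3
              rw [hea.neg_one_pow, hob.neg_one_pow]
              have h3 : i.val + 3 ≤ j.val := by
                have h1 := Nat.even_iff.1 hea; have h2 := Nat.odd_iff.1 hob; omega
              have h3R : (i.val:ℝ) + 3 ≤ (j.val:ℝ) := by exact_mod_cast h3
              have hb3 : j.val + 3 ≤ n := by
                have h2 := Nat.odd_iff.1 hob; omega
              have hb3R : (j.val:ℝ) + 3 ≤ (n:ℝ) := by exact_mod_cast hb3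
              have ha2 : (2:ℝ) ≤ (i.val:ℝ) := by
                exact_mod_cast (show 2 ≤ i.val by have := Nat.even_iff.1 hea; omega)
              rintro (⟨p, q⟩ | ⟨p, q⟩) <;> linarith
            · -- odd even : s = b - a ≥ 3
              rw [hoa.neg_one_pow, heb.neg_one_pow]
              have h3 : i.val + 3 ≤ j.val := by
                have h1 := Nat.odd_iff.1 hoa; have h2 := Nat.even_iff.1 heb; omega
              have h3R : (i.val:ℝ) + 3 ≤ (j.val:ℝ) := by exact_mod_cast h3
              rintro (⟨p, q⟩ | ⟨p, q⟩) <;> linarith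
            · -- odd odd : s = -(a+b), gap trick
              rw [hoa.neg_one_pow, hob.neg_one_pow]
              have h4R : (4:ℝ) ≤ (i.val:ℝ) + (j.val:ℝ) := by
                exact_mod_cast (show 4 ≤ i.val + j.val by
                  have h1 := Nat.odd_iff.1 hoa; have h2 := Nat.odd_iff.1 hob; omega)
              rintro (⟨p, q⟩ | ⟨p, q⟩)
              · have h1 : i.val + j.val + 1 ≤ n := by
                  have : (i.val:ℝ) + (j.val:ℝ) < (n:ℝ) := by linarith
                  have := (by exact_mod_cast this : i.val + j.val < n)
                  omega
                have h2 : n ≤ i.val + j.val + 1 := by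
                  have : (n:ℝ) < (i.val:ℝ) + (j.val:ℝ) + 2 := by linarith
                  have := (by exact_mod_cast this : n < i.val + j.val + 2)
                  omega
                have h1R : (i.val:ℝ) + (j.val:ℝ) + 1 = (n:ℝ) := by
                  exact_mod_cast (by omega : i.val + j.val + 1 = n)
                linarith
              · linarith
  intro u v huv
  rw [odd4 θ hmono, t0, t1, t2, t3]
  rcases lt_trichotomy u.val v.val with h | h | h
  · exact key u v h
  · exact absurd (Fin.ext h) huv
  · rw [adj_comm, add_comm (r u) (r v)]
    exact key v u h

lemma not_three {n : ℕ} (hn : 5 ≤ n) (θ1 θ2 θ3 : ℝ) (h12 : θ1 < θ2) (h23 : θ2 < θ3)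
    (r : Fin n → ℝ)
    (h : ∀ u v : Fin n, u ≠ v → ((cycleGraph n).Adj u v ↔
      ((θ1 ≤ r u + r v ∧ r u + r v < θ2) ∨ θ3 ≤ r u + r v))) : False := by
  have hn0 : 0 < n := by omega
  set e : ℤ → Fin n := ez hn0 with he
  have hE : ∀ k : ℤ, (θ1 ≤ r (e k) + r (e (k+1)) ∧ r (e k) + r (e (k+1)) < θ2) ∨
      θ3 ≤ r (e k) + r (e (k+1)) := by
    intro k
    have ha := ez_adj hn k
    exact (h _ _ ha.ne).1 ha
  have hN2 : ∀ k : ℤ, ¬(θ1 ≤ r (e k) + r (e (k+2)) ∧ r (e k) + r (e (k+2)) < θ2) ∧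
      r (e k) + r (e (k+2)) < θ3 := by
    intro k
    have ha := ez_nadj2 hn k
    have h' : ¬(_ ∨ _) := fun hc => ha.1 ((h _ _ ha.2).2 hc)
    exact ⟨fun hc => h' (Or.inl hc), lt_of_not_ge fun hc => h' (Or.inr hc)⟩
  have hN3 : ∀ k : ℤ, ¬(θ1 ≤ r (e k) + r (e (k+3)) ∧ r (e k) + r (e (k+3)) < θ2) ∧
      r (e k) + r (e (k+3)) < θ3 := by
    intro k
    have ha := ez_nadj3 hn k
    have h' : ¬(_ ∨ _) := fun hc => ha.1 ((h _ _ ha.2).2 hc)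
    exact ⟨fun hc => h' (Or.inl hc), lt_of_not_ge fun hc => h' (Or.inr hc)⟩
  by_cases hH : ∃ m : ℤ, θ3 ≤ r (e m) + r (e (m+1))
  · -- Case II : heavy edge exists
    obtain ⟨m, hsum⟩ := hH
    rcases le_or_gt (r (e (m+1))) (r (e m)) with hor | hor
    · -- forward orientation
      refine caseII_core θ1 θ2 θ3 (r (e (m-3))) (r (e (m-2))) (r (e (m-1))) (r (e m))
        (r (e (m+1))) (r (e (m+2))) (r (e (m+3))) ?_ ?_ ?_ ?_ ?_ hsum hor ?_ ?_ ?_ ?_ ?_ ?_ ?_ ?_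
      · have := hE (m-3); rw [show m-3+1 = m-2 by ring] at this; exact this
      · have := hE (m-2); rw [show m-2+1 = m-1 by ring] at this; exact this
      · have := hE (m-1); rw [show m-1+1 = m by ring] at this; exact this
      · have := hE (m+1); rw [show m+1+1 = m+2 by ring] at this; exact this
      · have := hE (m+2); rw [show m+2+1 = m+3 by ring] at this; exact this
      · have := hN3 (m-3); rw [show m-3+3 = m by ring] at this; exact this
      · have := hN2 (m-2); rw [show m-2+2 = m by ring] at this; exact this
      · exact hN2 m
      · exact hN3 m
      · have := hN2 (m+1); rw [show m+1+2 = m+3 by ring] at this; exact this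
      · have := hN3 (m-2); rw [show m-2+3 = m+1 by ring] at this; exact this
      · have := hN2 (m-1); rw [show m-1+2 = m+1 by ring] at this; exact this
      · have := hN3 (m-1); rw [show m-1+3 = m+2 by ring] at this; exact this
    · -- reverse orientation
      refine caseII_core θ1 θ2 θ3 (r (e (m+4))) (r (e (m+3))) (r (e (m+2))) (r (e (m+1)))
        (r (e m)) (r (e (m-1))) (r (e (m-2))) ?_ ?_ ?_ ?_ ?_ (by linarith) hor.le ?_ ?_ ?_ ?_ ?_ ?_ ?_ ?_
      · have := hE (m+3); rw [show m+3+1 = m+4 by ring, add_comm (r (e (m+3)))] at this; exact this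
      · have := hE (m+2); rw [show m+2+1 = m+3 by ring, add_comm (r (e (m+2)))] at this; exact this
      · have := hE (m+1); rw [show m+1+1 = m+2 by ring, add_comm (r (e (m+1)))] at this; exact this
      · have := hE (m-1); rw [show m-1+1 = m by ring, add_comm (r (e (m-1)))] at this; exact this
      · have := hE (m-2); rw [show m-2+1 = m-1 by ring, add_comm (r (e (m-2)))] at this; exact this
      · have := hN3 (m+1); rw [show m+1+3 = m+4 by ring, add_comm (r (e (m+1)))] at this; exact this
      · have := hN2 (m+1); rw [show m+1+2 = m+3 by ring, add_comm (r (e (m+1)))] at this; exact this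
      · have := hN2 (m-1); rw [show m-1+2 = m+1 by ring, add_comm (r (e (m-1)))] at this; exact this
      · have := hN3 (m-2); rw [show m-2+3 = m+1 by ring, add_comm (r (e (m-2)))] at this; exact this
      · have := hN2 (m-2); rw [show m-2+2 = m by ring, add_comm (r (e (m-2)))] at this; exact this
      · have := hN3 m; rw [show m+3 = m+3 by ring, add_comm (r (e m))] at this; exact this
      · have := hN2 m; rw [add_comm (r (e m))] at this; exact this
      · have := hN3 (m-1); rw [show m-1+3 = m+2 by ring, add_comm (r (e (m-1)))] at this; exact this
  · -- Case I : all edges in the low interval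
    push_neg at hH
    refine interval_core hn θ1 θ2 (fun k => r (e k)) (fun k => congrArg r (ez_shift hn0 k)) ?_ ?_
    · intro k
      rcases hE k with h' | h'
      · exact h'
      · exact absurd h' (not_le.2 (hH k))
    · intro k
      exact (hN3 k).1

end Aux

/-- The threshold number of Cₙ is 1 if n = 3, 2 if n = 4, and 4 if n ≥ 5. -/
theorem threshold_number_of_cycles (n : ℕ) (hn : 3 ≤ n) :
    IsLeast {k : ℕ | 0 < k ∧ IsKThresholdGraph (SimpleGraph.cycleGraph n) k}
      (if n = 3 then 1 else if n = 4 then 2 else 4) := by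
  rcases eq_or_ne n 3 with rfl | h3
  · simp only [if_pos rfl]
    exact ⟨⟨one_pos, c3_is1⟩, fun k hk => hk.1⟩
  · rcases eq_or_ne n 4 with rfl | h4
    · rw [if_neg h3, if_pos rfl]
      refine ⟨⟨by norm_num, c4_is2⟩, ?_⟩
      rintro k ⟨hk0, hkT⟩
      by_contra hlt
      have hk1 : k = 1 := by omega
      subst hk1
      exact c4_not1 hkT
    · have hn5 : 5 ≤ n := by omega
      rw [if_neg h3, if_neg h4]
      constructor
      · refine ⟨by norm_num, ?_⟩
        rcases Nat.even_or_odd n with he | ho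
        · exact cn_is4_even hn5 (Nat.even_iff.1 he)
        · exact cn_is4_odd hn5 (Nat.odd_iff.1 ho)
      · rintro k ⟨hk0, hkT⟩
        by_contra hlt
        have hk3 : k = 1 ∨ k = 2 ∨ k = 3 := by omega
        have hne : Nonempty (Fin n) := ⟨⟨0, by omega⟩⟩
        have h3T : IsKThresholdGraph (cycleGraph n) 3 := by
          rcases hk3 with rfl | rfl | rfl
          · exact isK_succ (isK_succ hkT)
          · exact isK_succ hkT
          · exact hkT
        obtain ⟨θ, hθ, r, h⟩ := h3T
        refine not_three hn5 (θ 0) (θ 1) (θ 2) (hθ (by decide)) (hθ (by decide)) r ?_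
        intro u v huv
        rw [← odd3 θ hθ]
        exact h u v huv
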